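/- Let α > 0. For every ε > 0 there exist nonzero square-summable sequences a = (a_n)_{n≥1} and b = (b_n)_{n≥1} of nonnegative reals such that ∑_{m=1}^∞ ∑_{n=1}^∞ a_m b_n (mn)^{α−1/2} / max(m,n)^{2α} ≥ (2/α − ε) · ‖a‖_{ℓ²} ‖b‖_{ℓ²}. In other words, the norm of the bilinear form B_α on ℓ² × ℓ² is at least 2/α. -/

import Mathlib

open Finset

lemma hilb_aux_lower (α : ℝ) (hα : 0 < α) (m : ℕ) :
    ((m : ℝ) ^ α - 1) / α ≤ ∑ j ∈ range m, ((j : ℝ) + 1) ^ (α - 1) := by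
  rcases le_or_gt α 1 with hle | hgt
  · have hanti : AntitoneOn (fun x : ℝ => x ^ (α - 1)) (Set.Icc 1 (1 + (m : ℝ))) := by
      intro x hx y hy hxy
      exact Real.rpow_le_rpow_of_nonpos (lt_of_lt_of_le one_pos hx.1) hxy (by linarith)
    have hint : (∫ x in (1:ℝ)..(1 + (m : ℝ)), x ^ (α - 1)) = ((1 + (m:ℝ)) ^ α - 1) / α := by
      rw [integral_rpow (Or.inl (by linarith)), show α - 1 + 1 = α by ring, Real.one_rpow]
    calc ((m : ℝ) ^ α - 1) / α ≤ ((1 + (m:ℝ)) ^ α - 1) / α := by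
          have := Real.rpow_le_rpow (Nat.cast_nonneg m) (by linarith : (m:ℝ) ≤ 1 + m) hα.le
          exact div_le_div_of_nonneg_right (by linarith) hα.le
      _ = ∫ x in (1:ℝ)..(1 + (m : ℝ)), x ^ (α - 1) := hint.symm
      _ ≤ ∑ i ∈ range m, ((1 : ℝ) + i) ^ (α - 1) := hanti.integral_le_sum
      _ = ∑ j ∈ range m, ((j : ℝ) + 1) ^ (α - 1) := by
          exact Finset.sum_congr rfl fun j _ => by rw [add_comm]
  · have hmono : MonotoneOn (fun x : ℝ => x ^ (α - 1)) (Set.Icc 0 (0 + (m : ℝ))) := by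
      intro x hx y hy hxy
      exact Real.rpow_le_rpow hx.1 hxy (by linarith)
    have hint : (∫ x in (0:ℝ)..(0 + (m : ℝ)), x ^ (α - 1)) = (m:ℝ) ^ α / α := by
      rw [integral_rpow (Or.inl (by linarith)), show α - 1 + 1 = α by ring,
        Real.zero_rpow hα.ne', zero_add, sub_zero]
    calc ((m : ℝ) ^ α - 1) / α ≤ (m:ℝ) ^ α / α := by
          apply div_le_div_of_nonneg_right (by linarith) hα.le
      _ = ∫ x in (0:ℝ)..(0 + (m : ℝ)), x ^ (α - 1) := hint.symm
      _ ≤ ∑ i ∈ range m, ((0 : ℝ) + ((i + 1 : ℕ) : ℝ)) ^ (α - 1) := hmono.integral_le_sum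
      _ = ∑ j ∈ range m, ((j : ℝ) + 1) ^ (α - 1) := by
          exact Finset.sum_congr rfl fun j _ => by push_cast; ring_nf

lemma hilb_aux_upper (α : ℝ) (hα : 0 < α) (N : ℕ) :
    ∑ i ∈ range N, ((i : ℝ) + 1) ^ (-α - 1) ≤ 1 + 1 / α := by
  cases N with
  | zero => simp; positivity
  | succ M =>
    rw [Finset.sum_range_succ']
    have h0 : ((0 : ℕ) : ℝ) + 1 = 1 := by norm_num
    have hanti : AntitoneOn (fun x : ℝ => x ^ (-α - 1)) (Set.Icc 1 (1 + (M : ℝ))) := by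
      intro x hx y hy hxy
      exact Real.rpow_le_rpow_of_nonpos (lt_of_lt_of_le one_pos hx.1) hxy (by linarith)
    have hint : (∫ x in (1:ℝ)..(1 + (M : ℝ)), x ^ (-α - 1))
        = (1 - (1 + (M:ℝ)) ^ (-α)) / α := by
      rw [integral_rpow (Or.inr ⟨by intro h; apply hα.ne'; linarith,
        Set.notMem_uIcc_of_lt one_pos (by positivity)⟩),
        show -α - 1 + 1 = -α by ring, Real.one_rpow, div_neg, ← neg_div, neg_sub]
    have hsum : ∑ i ∈ range M, (((i + 1 : ℕ) : ℝ) + 1) ^ (-α - 1)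
        ≤ (1 - (1 + (M:ℝ)) ^ (-α)) / α := by
      rw [← hint]
      have := hanti.sum_le_integral
      refine le_trans (le_of_eq ?_) this
      exact Finset.sum_congr rfl fun i _ => by push_cast; ring_nf
    have hpow : (0:ℝ) ≤ (1 + (M:ℝ)) ^ (-α) := Real.rpow_nonneg (by positivity) _
    have h1 : (((0:ℕ):ℝ) + 1) ^ (-α - 1) = 1 := by rw [h0, Real.one_rpow]
    rw [h1]
    have : (1 - (1 + (M:ℝ)) ^ (-α)) / α ≤ 1 / α := by
      apply div_le_div_of_nonneg_right (by linarith) hα.le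
    linarith [hsum, this]

lemma hilb_main_sum (α : ℝ) (hα : 0 < α) (N : ℕ) :
    2 / α * (∑ i ∈ range N, 1 / ((i : ℝ) + 1)) - (2 / α * (1 + 1 / α) + 2)
      ≤ ∑ i ∈ range N, ∑ j ∈ range N,
          ((i : ℝ) + 1) ^ (α - 1) * ((j : ℝ) + 1) ^ (α - 1)
            / (max ((i : ℝ) + 1) ((j : ℝ) + 1)) ^ (2 * α) := by
  set t : ℕ → ℕ → ℝ := fun i j => ((i : ℝ) + 1) ^ (α - 1) * ((j : ℝ) + 1) ^ (α - 1)
      / (max ((i : ℝ) + 1) ((j : ℝ) + 1)) ^ (2 * α) with ht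
  have tsymm : ∀ i j, t i j = t j i := by
    intro i j; simp only [ht]; rw [max_comm, mul_comm]
  have split : ∀ i ∈ range N, ∑ j ∈ range N, t i j
      = ∑ j ∈ range (i + 1), t i j + ∑ j ∈ Ico (i + 1) N, t i j := by
    intro i hi
    rw [range_eq_Ico, ← Finset.sum_Ico_consecutive _ (Nat.zero_le _) (mem_range.1 hi),
      ← range_eq_Ico]
  have comm : ∑ i ∈ range N, ∑ j ∈ Ico (i + 1) N, t i j
      = ∑ i ∈ range N, ∑ j ∈ range i, t i j := by
    rw [range_eq_Ico, Finset.sum_Ico_Ico_comm' 0 N t]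
    simp only [Nat.Ico_zero_eq_range]
    exact Finset.sum_congr rfl fun j _ => Finset.sum_congr rfl fun i _ => tsymm i j
  have hPB : ∀ i, ∑ j ∈ range i, t i j = (∑ j ∈ range (i + 1), t i j) - t i i := by
    intro i; rw [Finset.sum_range_succ]; ring
  have hsum : ∑ i ∈ range N, ∑ j ∈ range N, t i j
      = ∑ i ∈ range N, (2 * (∑ j ∈ range (i + 1), t i j) - t i i) := by
    calc ∑ i ∈ range N, ∑ j ∈ range N, t i j
        = ∑ i ∈ range N, (∑ j ∈ range (i + 1), t i j + ∑ j ∈ Ico (i + 1) N, t i j) :=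
          Finset.sum_congr rfl split
      _ = (∑ i ∈ range N, ∑ j ∈ range (i + 1), t i j)
            + ∑ i ∈ range N, ∑ j ∈ Ico (i + 1) N, t i j := Finset.sum_add_distrib
      _ = (∑ i ∈ range N, ∑ j ∈ range (i + 1), t i j)
            + ∑ i ∈ range N, ((∑ j ∈ range (i + 1), t i j) - t i i) := by
          rw [comm]; exact congrArg _ (Finset.sum_congr rfl fun i _ => hPB i)
      _ = ∑ i ∈ range N, (2 * (∑ j ∈ range (i + 1), t i j) - t i i) := by
          rw [← Finset.sum_add_distrib]
          exact Finset.sum_congr rfl fun i _ => by ring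
  rw [hsum]
  have hstep : ∀ i ∈ range N,
      2 / α * (1 / ((i : ℝ) + 1)) - 2 / α * ((i : ℝ) + 1) ^ (-α - 1)
          - ((i : ℝ) + 1) ^ (-(1:ℝ) - 1)
        ≤ 2 * (∑ j ∈ range (i + 1), t i j) - t i i := by
    intro i _
    have hx : (0:ℝ) < (i : ℝ) + 1 := by positivity
    have tij : ∀ j, j ≤ i → t i j = ((i : ℝ) + 1) ^ (-α - 1) * ((j : ℝ) + 1) ^ (α - 1) := by
      intro j hj
      have hmax : max ((i : ℝ) + 1) ((j : ℝ) + 1) = (i : ℝ) + 1 := by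
        apply max_eq_left; exact_mod_cast Nat.succ_le_succ hj
      calc t i j = ((i : ℝ) + 1) ^ (α - 1) * ((i : ℝ) + 1) ^ (-(2 * α)) * ((j : ℝ) + 1) ^ (α - 1) := by
            rw [ht]; simp only [hmax]
            rw [Real.rpow_neg hx.le, div_eq_mul_inv]; ring
        _ = ((i : ℝ) + 1) ^ (-α - 1) * ((j : ℝ) + 1) ^ (α - 1) := by
            rw [← Real.rpow_add hx, show α - 1 + -(2 * α) = -α - 1 by ring]
    have hB : ((i : ℝ) + 1) ^ (-α - 1) * ((((i : ℝ) + 1) ^ α - 1) / α)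
        ≤ ∑ j ∈ range (i + 1), t i j := by
      calc ((i : ℝ) + 1) ^ (-α - 1) * ((((i : ℝ) + 1) ^ α - 1) / α)
          ≤ ((i : ℝ) + 1) ^ (-α - 1) * ∑ j ∈ range (i + 1), ((j : ℝ) + 1) ^ (α - 1) := by
            apply mul_le_mul_of_nonneg_left _ (Real.rpow_nonneg hx.le _)
            have := hilb_aux_lower α hα (i + 1)
            push_cast at this
            exact this
        _ = ∑ j ∈ range (i + 1), t i j := by
            rw [Finset.mul_sum]
            exact Finset.sum_congr rfl fun j hj => (tij j (Nat.lt_succ_iff.mp (mem_range.1 hj))).symm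
    have hBval : ((i : ℝ) + 1) ^ (-α - 1) * ((((i : ℝ) + 1) ^ α - 1) / α)
        = (((i : ℝ) + 1) ^ (-(1:ℝ)) - ((i : ℝ) + 1) ^ (-α - 1)) / α := by
      rw [mul_div_assoc']
      congr 1
      rw [mul_sub, mul_one, ← Real.rpow_add hx, show -α - 1 + α = -(1:ℝ) by ring]
    have hd : t i i = ((i : ℝ) + 1) ^ (-(1:ℝ) - 1) := by
      rw [tij i le_rfl, ← Real.rpow_add hx, show -α - 1 + (α - 1) = -(1:ℝ) - 1 by ring]
    have hinv : ((i : ℝ) + 1) ^ (-(1:ℝ)) = 1 / ((i : ℝ) + 1) := by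
      rw [Real.rpow_neg_one, one_div]
    rw [hd]
    have h2B : 2 * ((((i : ℝ) + 1) ^ (-(1:ℝ)) - ((i : ℝ) + 1) ^ (-α - 1)) / α)
        ≤ 2 * (∑ j ∈ range (i + 1), t i j) := by
      rw [← hBval]; linarith [hB]
    rw [hinv] at h2B
    have : 2 / α * (1 / ((i : ℝ) + 1)) - 2 / α * ((i : ℝ) + 1) ^ (-α - 1)
        = 2 * ((1 / ((i : ℝ) + 1) - ((i : ℝ) + 1) ^ (-α - 1)) / α) := by ring
    linarith [h2B, this.ge, this.le]
  calc 2 / α * (∑ i ∈ range N, 1 / ((i : ℝ) + 1)) - (2 / α * (1 + 1 / α) + 2)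
      ≤ ∑ i ∈ range N, (2 / α * (1 / ((i : ℝ) + 1)) - 2 / α * ((i : ℝ) + 1) ^ (-α - 1)
          - ((i : ℝ) + 1) ^ (-(1:ℝ) - 1)) := by
        rw [Finset.sum_sub_distrib, Finset.sum_sub_distrib, ← Finset.mul_sum, ← Finset.mul_sum]
        have h2 := hilb_aux_upper α hα N
        have h3 : ∑ i ∈ range N, ((i : ℝ) + 1) ^ (-(1:ℝ) - 1) ≤ 1 + 1 / 1 := hilb_aux_upper 1 one_pos N
        rw [div_one] at h3
        have h2α : (0:ℝ) ≤ 2 / α := by positivity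
        have := mul_le_mul_of_nonneg_left h2 h2α
        have h4 : ∑ i ∈ range N, ((i : ℝ) + 1) ^ (-(1:ℝ) - 1) ≤ 2 := h3.trans (by norm_num)
        exact le_trans (le_of_eq (by ring)) (sub_le_sub (sub_le_sub_left this _) h4)
    _ ≤ ∑ i ∈ range N, (2 * (∑ j ∈ range (i + 1), t i j) - t i i) := Finset.sum_le_sum hstep

/-- For `α > 0` and every `ε > 0` there are nonzero nonnegative square-summable sequences
`a, b` with `∑_{m,n} a_m b_n (mn)^{α-1/2} / max(m,n)^{2α} ≥ (2/α - ε) ‖a‖_{ℓ²} ‖b‖_{ℓ²}`;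
i.e., the norm of the bilinear form `B_α` on `ℓ² × ℓ²` is at least `2/α`. -/
theorem bilinear_form_lower_bound_two_div_alpha (α : ℝ) (hα : 0 < α) (ε : ℝ) (hε : 0 < ε) :
    ∃ a b : ℕ+ → ℝ, (∀ n, 0 ≤ a n) ∧ (∀ n, 0 ≤ b n) ∧
      (Summable fun n => a n ^ 2) ∧ (Summable fun n => b n ^ 2) ∧
      a ≠ 0 ∧ b ≠ 0 ∧
      (2/α - ε) * (Real.sqrt (∑' n : ℕ+, a n ^ 2) * Real.sqrt (∑' n : ℕ+, b n ^ 2))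
        ≤ ∑' (m : ℕ+) (n : ℕ+),
            a m * b n * ((m : ℝ) * (n : ℝ)) ^ (α - 1/2) / (max (m : ℝ) (n : ℝ)) ^ (2*α) := by
  -- choose N
  obtain ⟨N, hN1, hHN⟩ : ∃ N : ℕ, 1 ≤ N ∧
      (2 / α * (1 + 1 / α) + 2) / ε ≤ ∑ i ∈ range N, 1 / ((i : ℝ) + 1) := by
    have h := Real.tendsto_sum_range_one_div_nat_succ_atTop.eventually_ge_atTop
      ((2 / α * (1 + 1 / α) + 2) / ε)
    obtain ⟨N, hN⟩ := ((Filter.eventually_ge_atTop 1).and h).exists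
    exact ⟨N, hN.1, hN.2⟩
  set H : ℝ := ∑ i ∈ range N, 1 / ((i : ℝ) + 1) with hH
  have hHnonneg : 0 ≤ H := Finset.sum_nonneg fun i _ => by positivity
  -- the finset of indices
  have hinj : Function.Injective (fun i : ℕ => (⟨i + 1, i.succ_pos⟩ : ℕ+)) := by
    intro i j h
    have := Subtype.mk_eq_mk.mp h
    omega
  set s : Finset ℕ+ := (range N).map ⟨fun i => (⟨i + 1, i.succ_pos⟩ : ℕ+), hinj⟩ with hs
  have hmem : ∀ m : ℕ+, (m : ℕ) ≤ N → m ∈ s := by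
    intro m hm
    simp only [hs, Finset.mem_map, Finset.mem_range, Function.Embedding.coeFn_mk]
    have hm1 : 1 ≤ (m : ℕ) := m.2
    refine ⟨(m : ℕ) - 1, by omega, ?_⟩
    apply Subtype.ext
    show (m : ℕ) - 1 + 1 = (m : ℕ)
    omega
  set a : ℕ+ → ℝ := fun n => if (n : ℕ) ≤ N then ((n : ℕ) : ℝ) ^ (-(1/2) : ℝ) else 0 with ha
  have hzero : ∀ n : ℕ+, n ∉ s → a n = 0 := by
    intro n hn
    rw [ha]
    simp only [ite_eq_right_iff]
    intro hle
    exact absurd (hmem n hle) hn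
  have ha0 : ∀ n, 0 ≤ a n := by
    intro n; rw [ha]; dsimp only
    split
    · exact Real.rpow_nonneg (Nat.cast_nonneg _) _
    · exact le_refl 0
  have hsq : ∀ n : ℕ+, a n ^ 2 = if (n : ℕ) ≤ N then ((n : ℕ) : ℝ) ^ (-1 : ℝ) else 0 := by
    intro n
    have hn : (0:ℝ) < ((n : ℕ) : ℝ) := by exact_mod_cast n.2
    rw [ha]; dsimp only
    split
    · rw [pow_two, ← Real.rpow_add hn]; norm_num
    · rw [pow_two, mul_zero]
  have hsqzero : ∀ n : ℕ+, n ∉ s → a n ^ 2 = 0 := by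
    intro n hn; rw [hzero n hn]; ring
  have hsummable : Summable fun n : ℕ+ => a n ^ 2 := summable_of_ne_finset_zero hsqzero
  -- value of tsum of squares
  have htsum : (∑' n : ℕ+, a n ^ 2) = H := by
    rw [tsum_eq_sum hsqzero, hs, Finset.sum_map]
    rw [hH]
    apply Finset.sum_congr rfl
    intro i hi
    have hiN : i + 1 ≤ N := mem_range.1 hi
    show a (⟨i + 1, i.succ_pos⟩ : ℕ+) ^ 2 = 1 / ((i : ℝ) + 1)
    refine (hsq _).trans ?_
    simp only [PNat.mk_coe]
    refine (if_pos hiN).trans ?_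
    show ((i + 1 : ℕ) : ℝ) ^ (-1 : ℝ) = 1 / ((i : ℝ) + 1)
    rw [Real.rpow_neg_one, one_div]
    push_cast
    ring_nf
  have hane : a ≠ 0 := by
    intro hcontra
    have h1 : a 1 = 0 := by rw [hcontra]; rfl
    rw [ha] at h1
    simp only [PNat.one_coe, Nat.cast_one, hN1, if_pos, Real.one_rpow] at h1
    exact one_ne_zero h1
  -- reduce the double tsum
  set F : ℕ+ → ℕ+ → ℝ := fun m n =>
    a m * a n * (((m : ℕ) : ℝ) * ((n : ℕ) : ℝ)) ^ (α - 1/2)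
      / (max ((m : ℕ) : ℝ) ((n : ℕ) : ℝ)) ^ (2 * α) with hF
  have hFzero : ∀ m : ℕ+, ∀ n ∉ s, F m n = 0 := by
    intro m n hn
    rw [hF]; dsimp only
    rw [hzero n hn, mul_zero, zero_mul, zero_div]
  have hFzero' : ∀ m : ℕ+, m ∉ s → (∑' n : ℕ+, F m n) = 0 := by
    intro m hm
    have : ∀ n : ℕ+, F m n = 0 := by
      intro n
      rw [hF]; dsimp only
      rw [hzero m hm, zero_mul, zero_mul, zero_div]
    simp only [this, tsum_zero]
  have hdouble : (∑' (m : ℕ+) (n : ℕ+), F m n)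
      = ∑ i ∈ range N, ∑ j ∈ range N,
          ((i : ℝ) + 1) ^ (α - 1) * ((j : ℝ) + 1) ^ (α - 1)
            / (max ((i : ℝ) + 1) ((j : ℝ) + 1)) ^ (2 * α) := by
    rw [tsum_eq_sum hFzero']
    rw [hs, Finset.sum_map]
    apply Finset.sum_congr rfl
    intro i hi
    rw [tsum_eq_sum (hFzero _), Finset.sum_map]
    apply Finset.sum_congr rfl
    intro j hj
    have hiN : i + 1 ≤ N := mem_range.1 hi
    have hjN : j + 1 ≤ N := mem_range.1 hj
    simp only [Function.Embedding.coeFn_mk, hF]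
    rw [ha]; dsimp only
    show (if ((⟨i + 1, i.succ_pos⟩ : ℕ+) : ℕ) ≤ N then _ else _) * (if ((⟨j + 1, j.succ_pos⟩ : ℕ+) : ℕ) ≤ N then _ else _) * _ / _ = _
    simp only [PNat.mk_coe]
    rw [if_pos hiN, if_pos hjN]
    show ((i + 1 : ℕ) : ℝ) ^ (-(1/2) : ℝ) * ((j + 1 : ℕ) : ℝ) ^ (-(1/2) : ℝ)
        * (((i + 1 : ℕ) : ℝ) * ((j + 1 : ℕ) : ℝ)) ^ (α - 1/2)
        / (max ((i + 1 : ℕ) : ℝ) ((j + 1 : ℕ) : ℝ)) ^ (2 * α)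
      = ((i : ℝ) + 1) ^ (α - 1) * ((j : ℝ) + 1) ^ (α - 1)
            / (max ((i : ℝ) + 1) ((j : ℝ) + 1)) ^ (2 * α)
    have hci : ((i + 1 : ℕ) : ℝ) = (i : ℝ) + 1 := by push_cast; ring
    have hcj : ((j + 1 : ℕ) : ℝ) = (j : ℝ) + 1 := by push_cast; ring
    rw [hci, hcj]
    have hxi : (0:ℝ) < (i : ℝ) + 1 := by positivity
    have hxj : (0:ℝ) < (j : ℝ) + 1 := by positivity
    congr 1
    rw [Real.mul_rpow hxi.le hxj.le]
    rw [show ((i : ℝ) + 1) ^ (-(1/2) : ℝ) * ((j : ℝ) + 1) ^ (-(1/2) : ℝ)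
        * (((i : ℝ) + 1) ^ (α - 1/2) * ((j : ℝ) + 1) ^ (α - 1/2))
      = (((i : ℝ) + 1) ^ (-(1/2) : ℝ) * ((i : ℝ) + 1) ^ (α - 1/2))
        * (((j : ℝ) + 1) ^ (-(1/2) : ℝ) * ((j : ℝ) + 1) ^ (α - 1/2)) from by ring]
    rw [← Real.rpow_add hxi, ← Real.rpow_add hxj, show -(1/2) + (α - 1/2) = α - 1 by ring]
  -- final chain
  refine ⟨a, a, ha0, ha0, hsummable, hsummable, hane, hane, ?_⟩
  rw [htsum, Real.mul_self_sqrt hHnonneg]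
  have hmain := hilb_main_sum α hα N
  have hC : 2 / α * (1 + 1 / α) + 2 ≤ ε * H := by
    have := (div_le_iff₀ hε).mp hHN
    linarith
  calc (2 / α - ε) * H = 2 / α * H - ε * H := by ring
    _ ≤ 2 / α * H - (2 / α * (1 + 1 / α) + 2) := by linarith
    _ ≤ ∑ i ∈ range N, ∑ j ∈ range N,
          ((i : ℝ) + 1) ^ (α - 1) * ((j : ℝ) + 1) ^ (α - 1)
            / (max ((i : ℝ) + 1) ((j : ℝ) + 1)) ^ (2 * α) := hmain
    _ = ∑' (m : ℕ+) (n : ℕ+), F m n := hdouble.symm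
    _ = ∑' (m : ℕ+) (n : ℕ+),
          a m * a n * ((m : ℝ) * (n : ℝ)) ^ (α - 1/2) / (max (m : ℝ) (n : ℝ)) ^ (2*α) := rfl
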